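/- Let ι be a measurable space, ν a measure on ι, and H : ι → Set(ℝ^d) a family of subsets of ℝ^d such that for each r ∈ (0,1] the function i ↦ L(E(H i, r) \ S(H i, r)) is measurable and i ↦ L(∂(H i)) is measurable. If ∫₀¹ (1/r) · (∫_ι L(E(H i, r) \ S(H i, r)) dν(i)) dr < ∞, then L(∂(H i)) = 0 for ν-almost every i. -/

import Mathlib

open MeasureTheory

lemma lintegral_one_div_Ioc_eq_top :
    ∫⁻ r in Set.Ioc (0:ℝ) 1, ENNReal.ofReal (1/r) = ⊤ := by
  by_contra h
  have hmeas : Measurable fun r : ℝ => (1:ℝ)/r := by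
    simpa [one_div] using (measurable_inv : Measurable fun r : ℝ => r⁻¹)
  have hint : IntegrableOn (fun r : ℝ => 1/r) (Set.Ioc (0:ℝ) 1) := by
    refine ⟨(hmeas.aestronglyMeasurable).restrict, ?_⟩
    rw [hasFiniteIntegral_iff_ofReal ?_]
    · exact lt_top_iff_ne_top.2 h
    · filter_upwards [ae_restrict_mem measurableSet_Ioc] with r hr
      have := hr.1
      positivity
  have hint' : IntegrableOn (fun r : ℝ => r ^ (-1 : ℝ)) (Set.Ioo (0:ℝ) 1) := by
    refine (hint.mono_set Set.Ioo_subset_Ioc_self).congr_fun ?_ measurableSet_Ioo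
    intro x hx
    simp [Real.rpow_neg_one, one_div]
  rw [intervalIntegral.integrableOn_Ioo_rpow_iff zero_lt_one] at hint'
  linarith

/-- Thinness implies Assumption 2: if
`∫₀¹ (1/r) ∫_ι L(E(H i,r) \ S(H i,r)) dν(i) dr < ∞`, then `ν`-almost every generating set
has Lebesgue-null topological boundary. -/
theorem ae_frontier_null_of_thin {ι : Type*} [MeasurableSpace ι] (d : ℕ) (ν : Measure ι)
    (H : ι → Set (EuclideanSpace ℝ (Fin d)))
    (hmeas : ∀ r ∈ Set.Ioc (0:ℝ) 1, Measurable fun i =>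
      volume ({y | Metric.infDist y (H i) < r} \
        {y | y ∈ H i ∧ r ≤ Metric.infDist y (frontier (H i))}))
    (hmeas' : Measurable fun i => volume (frontier (H i)))
    (hfin : ∫⁻ r in Set.Ioc (0:ℝ) 1, ENNReal.ofReal (1/r) *
      ∫⁻ i, volume ({y | Metric.infDist y (H i) < r} \
        {y | y ∈ H i ∧ r ≤ Metric.infDist y (frontier (H i))}) ∂ν < ⊤) :
    ∀ᵐ i ∂ν, volume (frontier (H i)) = 0 := by
  set c := ∫⁻ i, volume (frontier (H i)) ∂ν with hc
  have hsub : ∀ r ∈ Set.Ioc (0:ℝ) 1, ∀ i, frontier (H i) ⊆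
      ({y | Metric.infDist y (H i) < r} \
        {y | y ∈ H i ∧ r ≤ Metric.infDist y (frontier (H i))}) := by
    intro r hr i y hy
    constructor
    · have h1 : Metric.infDist y (H i) = 0 := by
        have : y ∈ closure (H i) := hy.1
        exact Metric.infDist_zero_of_mem_closure this
      simpa [h1] using hr.1
    · rintro ⟨_, h2⟩
      have : Metric.infDist y (frontier (H i)) = 0 :=
        Metric.infDist_zero_of_mem hy
      rw [this] at h2
      exact absurd (h2.trans_lt hr.1).false (by simp)
  have hle : ∀ r ∈ Set.Ioc (0:ℝ) 1, c ≤
      ∫⁻ i, volume ({y | Metric.infDist y (H i) < r} \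
        {y | y ∈ H i ∧ r ≤ Metric.infDist y (frontier (H i))}) ∂ν := by
    intro r hr
    exact lintegral_mono fun i => measure_mono (hsub r hr i)
  have hczero : c = 0 := by
    by_contra hc0
    have : ∫⁻ r in Set.Ioc (0:ℝ) 1, ENNReal.ofReal (1/r) * c ≤
        ∫⁻ r in Set.Ioc (0:ℝ) 1, ENNReal.ofReal (1/r) *
          ∫⁻ i, volume ({y | Metric.infDist y (H i) < r} \
            {y | y ∈ H i ∧ r ≤ Metric.infDist y (frontier (H i))}) ∂ν := by
      refine setLIntegral_mono_ae' measurableSet_Ioc ?_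
      filter_upwards with r hr using mul_le_mul_right (hle r hr) _
    have heq : ∫⁻ r in Set.Ioc (0:ℝ) 1, ENNReal.ofReal (1/r) * c =
        (∫⁻ r in Set.Ioc (0:ℝ) 1, ENNReal.ofReal (1/r)) * c := by
      exact lintegral_mul_const _ (show Measurable fun r : ℝ => ENNReal.ofReal (1/r) by fun_prop)
    rw [heq, lintegral_one_div_Ioc_eq_top, ENNReal.top_mul hc0] at this
    exact absurd (this.trans_lt hfin) (by simp)
  rw [hc, lintegral_eq_zero_iff hmeas'] at hczero
  exact hczero
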